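/- Let L > 0, let p_d ∈ ℝ³ with ‖p_d‖ = L, and let p : ℝ → ℝ³ be a curve with ‖p(t)‖ = L for all t, differentiable at t₀ with derivative v := p'(t₀), and such that p(t₀) × p_d ≠ 0. Define Δ := arccos(⟨p(t₀), p_d⟩ / L²), t̂ := (p_d − (⟨p(t₀), p_d⟩ / L²) p(t₀)) / (L sin Δ), and let w := −(⟨v, p_d⟩ / L²) · p(t₀) / (L sin Δ) − (cos Δ / (L sin Δ)) · (v − ⟨v, t̂⟩ t̂). If moreover Δ < π/2, then L Δ · ⟨v, w⟩ ≥ −‖v‖². -/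

import Mathlib

open Matrix

/-- Euclidean norm on `ℝ³` (as `Fin 3 → ℝ`). -/
noncomputable def norm3 (v : Fin 3 → ℝ) : ℝ := Real.sqrt (∑ i, v i ^ 2)

/-- Euclidean inner product on `ℝ³` (as `Fin 3 → ℝ`). -/
def inner3 (v w : Fin 3 → ℝ) : ℝ := ∑ i, v i * w i

/-- The angle `Δ = arccos(⟨p, p_d⟩/L²)` between `p` and `p_d`. -/
noncomputable def angleTo (L : ℝ) (pd p : Fin 3 → ℝ) : ℝ :=
  Real.arccos (inner3 p pd / L ^ 2)

/-- The geodesic unit tangent vector `t̂ = (p_d - (⟨p,p_d⟩/L²) p)/(L sin Δ)`. -/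
noncomputable def geoTangent (L : ℝ) (pd p : Fin 3 → ℝ) : Fin 3 → ℝ :=
  (L * Real.sin (angleTo L pd p))⁻¹ • (pd - (inner3 p pd / L ^ 2) • p)

/-- The derivative of `t̂` along the curve:
`w = -(⟨v, p_d⟩/L²) p/(L sin Δ) - (cos Δ/(L sin Δ))(v - ⟨v, t̂⟩ t̂)`. -/
noncomputable def geoTangentDeriv (L : ℝ) (pd p v : Fin 3 → ℝ) : Fin 3 → ℝ :=
  -((inner3 v pd / L ^ 2) * (L * Real.sin (angleTo L pd p))⁻¹) • p -
    (Real.cos (angleTo L pd p) / (L * Real.sin (angleTo L pd p))) •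
      (v - inner3 v (geoTangent L pd p) • geoTangent L pd p)

lemma inner3_nonneg (v : Fin 3 → ℝ) : 0 ≤ inner3 v v := by
  unfold inner3
  exact Finset.sum_nonneg fun i _ => mul_self_nonneg _

lemma inner3_expand (v w : Fin 3 → ℝ) :
    inner3 v w = v 0 * w 0 + v 1 * w 1 + v 2 * w 2 := by
  unfold inner3; rw [Fin.sum_univ_three]

lemma inner3_smul_right (c : ℝ) (v w : Fin 3 → ℝ) :
    inner3 v (c • w) = c * inner3 v w := by
  simp only [inner3_expand, Pi.smul_apply, smul_eq_mul]; ring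

lemma inner3_smul_left (c : ℝ) (v w : Fin 3 → ℝ) :
    inner3 (c • v) w = c * inner3 v w := by
  simp only [inner3_expand, Pi.smul_apply, smul_eq_mul]; ring

lemma inner3_sub_right (v w x : Fin 3 → ℝ) :
    inner3 v (w - x) = inner3 v w - inner3 v x := by
  simp only [inner3_expand, Pi.sub_apply]; ring

lemma inner3_sub_left (v w x : Fin 3 → ℝ) :
    inner3 (v - x) w = inner3 v w - inner3 x w := by
  simp only [inner3_expand, Pi.sub_apply]; ring

lemma inner3_comm (v w : Fin 3 → ℝ) : inner3 v w = inner3 w v := by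
  simp only [inner3_expand]; ring

lemma norm3_sq (v : Fin 3 → ℝ) : norm3 v ^ 2 = inner3 v v := by
  unfold norm3 inner3
  rw [Real.sq_sqrt (Finset.sum_nonneg fun i _ => by positivity)]
  congr 1; ext i; ring

/-- The lower bound `B₂ = dist(p, p_d) ⟨v, dt̂/dt⟩ ≥ -‖ṗ‖²` in the proof of
Proposition 2, valid when the angle `Δ` is less than `π/2`. -/
theorem stmt12 (L : ℝ) (hL : 0 < L) (pd : Fin 3 → ℝ) (hpd : norm3 pd = L)
    (p : ℝ → Fin 3 → ℝ) (hp : ∀ t, norm3 (p t) = L) (t₀ : ℝ) (v : Fin 3 → ℝ)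
    (hv : HasDerivAt p v t₀) (hc : crossProduct (p t₀) pd ≠ 0)
    (hΔ : angleTo L pd (p t₀) < Real.pi / 2) :
    -(norm3 v ^ 2) ≤
      L * angleTo L pd (p t₀) * inner3 v (geoTangentDeriv L pd (p t₀) v) := by
  set q := p t₀ with hq
  have hq2 : inner3 q q = L ^ 2 := by rw [← norm3_sq, hp]
  have hpd2 : inner3 pd pd = L ^ 2 := by rw [← norm3_sq, hpd]
  -- v ⟂ q
  have hvq : inner3 v q = 0 := by
    have hcomp : ∀ i : Fin 3, HasDerivAt (fun t => p t i) (v i) t₀ := fun i =>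
      (ContinuousLinearMap.proj (R := ℝ) (φ := fun _ : Fin 3 => ℝ)
        i).hasFDerivAt.comp_hasDerivAt t₀ hv
    have hsum : HasDerivAt (fun t => ∑ i, (p t i) ^ 2)
        (∑ i : Fin 3, 2 * p t₀ i ^ 1 * v i) t₀ :=
      HasDerivAt.fun_sum fun i _ => by simpa using (hcomp i).fun_pow 2
    have hconst : (fun t => ∑ i, (p t i) ^ 2) = fun _ => L ^ 2 := by
      funext t
      have h1 := norm3_sq (p t)
      rw [hp t] at h1
      unfold inner3 at h1
      rw [h1]; congr 1; ext i; ring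
    have hzero : HasDerivAt (fun t => ∑ i, (p t i) ^ 2) 0 t₀ := by
      rw [hconst]; exact hasDerivAt_const t₀ _
    have hu := hsum.unique hzero
    simp only [pow_one] at hu
    have h2 : (2 : ℝ) * inner3 v q = 0 := by
      unfold inner3; rw [Finset.mul_sum, ← hu]; congr 1; ext i; rw [hq]; ring
    linarith
  -- Lagrange identity and |⟨q,pd⟩| < L²
  have hcross : ∑ i, (crossProduct q pd) i ^ 2
      = inner3 q q * inner3 pd pd - (inner3 q pd) ^ 2 := by
    rw [cross_apply]
    simp only [inner3_expand]
    rw [Fin.sum_univ_three]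
    simp [Matrix.cons_val_zero, Matrix.cons_val_one]
    ring
  have hcpos : 0 < ∑ i, (crossProduct q pd) i ^ 2 := by
    rcases Function.ne_iff.mp hc with ⟨i, hi⟩
    exact Finset.sum_pos' (fun j _ => sq_nonneg _)
      ⟨i, Finset.mem_univ i, pow_pos (abs_pos.mpr hi) 2 |>.trans_eq (by rw [sq_abs]) ⟩
  have hlt : (inner3 q pd) ^ 2 < L ^ 4 := by
    rw [hq2, hpd2] at hcross
    nlinarith
  set c : ℝ := inner3 q pd / L ^ 2 with hcdef
  have hL2 : (0:ℝ) < L ^ 2 := by positivity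
  have hc2 : c ^ 2 < 1 := by
    rw [hcdef, div_pow, div_lt_one (by positivity)]
    nlinarith
  have hc1 : c < 1 := by nlinarith
  have hcm1 : -1 < c := by nlinarith
  set Δ : ℝ := angleTo L pd q with hΔdef
  have hΔeq : Δ = Real.arccos c := rfl
  have hΔpos : 0 < Δ := by rw [hΔeq]; exact Real.arccos_pos.mpr hc1
  have hcosΔ : Real.cos Δ = c := by
    rw [hΔeq]; exact Real.cos_arccos (le_of_lt hcm1) (le_of_lt hc1)
  have hsinΔpos : 0 < Real.sin Δ :=
    Real.sin_pos_of_pos_of_lt_pi hΔpos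
      (lt_of_lt_of_le hΔ (by linarith [Real.pi_pos]))
  have hcosΔpos : 0 < Real.cos Δ :=
    Real.cos_pos_of_mem_Ioo ⟨by linarith [Real.pi_pos], hΔ⟩
  -- key: Δ cos Δ ≤ sin Δ
  have hkey : Δ * Real.cos Δ ≤ Real.sin Δ := by
    have ht := Real.lt_tan hΔpos hΔ
    rw [Real.tan_eq_sin_div_cos] at ht
    have := (lt_div_iff₀ hcosΔpos).mp ht
    linarith
  set s : ℝ := L * Real.sin Δ with hsdef
  have hspos : 0 < s := mul_pos hL hsinΔpos
  set th := geoTangent L pd q with hth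
  have hthdef : th = s⁻¹ • (pd - c • q) := rfl
  have hqpd : inner3 pd q = inner3 q pd := inner3_comm pd q
  have hvth : inner3 v th = s⁻¹ * inner3 v pd := by
    rw [hthdef, inner3_smul_right, inner3_sub_right, inner3_smul_right, hvq]
    ring
  have hsin2 : Real.sin Δ ^ 2 = 1 - c ^ 2 := by
    have := Real.sin_sq_add_cos_sq Δ
    rw [hcosΔ] at this; linarith
  have hcL : inner3 q pd = c * L ^ 2 := by rw [hcdef]; field_simp
  have hthth : inner3 th th = 1 := by
    rw [hthdef]
    simp only [inner3_smul_right, inner3_smul_left, inner3_sub_right,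
      inner3_sub_left, hq2, hpd2, hqpd, hcL]
    rw [hsdef]
    field_simp
    linear_combination (-1) * hsin2
  set a : ℝ := inner3 v th with ha
  set V : ℝ := inner3 v v with hV
  have hVa : 0 ≤ V - a ^ 2 := by
    have h0 : 0 ≤ inner3 (v - a • th) (v - a • th) := inner3_nonneg _
    have hthv : inner3 th v = a := by rw [inner3_comm]
    have hexp : inner3 (v - a • th) (v - a • th) = V - a ^ 2 := by
      simp only [inner3_sub_right, inner3_sub_left, inner3_smul_right,
        inner3_smul_left, hthth, hthv, ← ha, ← hV]
      ring
    linarith [hexp ▸ h0]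
  -- compute ⟨v, w⟩
  have hw : inner3 v (geoTangentDeriv L pd q v)
      = -(Real.cos Δ / s) * (V - a ^ 2) := by
    unfold geoTangentDeriv
    rw [← hΔdef, ← hsdef, ← hth]
    simp only [inner3_sub_right, inner3_smul_right, ← ha, hvq, ← hV]
    ring
  rw [hw, norm3_sq, ← hV]
  have heq : L * Δ * (-(Real.cos Δ / s) * (V - a ^ 2))
      = -(Δ * Real.cos Δ / Real.sin Δ) * (V - a ^ 2) := by
    rw [hsdef]
    field_simp
  rw [heq]
  have hr1 : Δ * Real.cos Δ / Real.sin Δ ≤ 1 :=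
    (div_le_one hsinΔpos).mpr hkey
  have hr0 : 0 ≤ Δ * Real.cos Δ / Real.sin Δ := by positivity
  have hVnn : 0 ≤ V := inner3_nonneg v
  have := mul_le_mul_of_nonneg_right hr1 hVa
  nlinarith [sq_nonneg a]
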